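/- Let 𝒜 be a family of k-element subsets of a finite set X with |𝒜| = C(x, k) for some real x ≥ k. Then the lower shadow Δ𝒜 (the family of (k−1)-element sets obtained by removing one element from a set in 𝒜) satisfies |Δ𝒜| ≥ C(x, k−1). -/

import Mathlib

/-- Generalized binomial coefficient `C(x, k)` for real `x`. -/
noncomputable def rchoose (x : ℝ) (k : ℕ) : ℝ :=
  (∏ i ∈ Finset.range k, (x - i)) / (k.factorial : ℝ)

open Finset
open scoped FinsetFamily

namespace LKK


lemma rchoose_zero (x : ℝ) : rchoose x 0 = 1 := by simp [rchoose]

lemma prod_nat_cast_sub (k : ℕ) : ∏ i ∈ range k, ((k : ℝ) - i) = k.factorial := by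
  induction k with
  | zero => simp
  | succ k ih =>
    rw [Finset.prod_range_succ']
    push_cast
    simp only [add_sub_add_right_eq_sub]
    rw [ih]
    push_cast [Nat.factorial_succ]
    ring

lemma pascal (x : ℝ) (k : ℕ) : rchoose x (k+1) = rchoose (x-1) (k+1) + rchoose (x-1) k := by
  unfold rchoose
  have h1 : ∏ i ∈ range (k+1), (x - i) = (∏ i ∈ range k, (x - 1 - i)) * x := by
    rw [Finset.prod_range_succ']
    congr 1
    · exact Finset.prod_congr rfl (by intros; push_cast; ring)
    · simp
  have h2 : ∏ i ∈ range (k+1), (x - 1 - i) = (∏ i ∈ range k, (x - 1 - i)) * (x - 1 - k) := by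
    rw [Finset.prod_range_succ]
  rw [h1, h2]
  have hf : ((k+1).factorial : ℝ) = (k+1) * k.factorial := by push_cast [Nat.factorial_succ]; ring
  have hk : (k.factorial : ℝ) ≠ 0 := Nat.cast_ne_zero.2 k.factorial_ne_zero
  have hk1 : ((k:ℝ)+1) ≠ 0 := by positivity
  rw [hf]
  field_simp
  ring

lemma one_le_rchoose {x : ℝ} {k : ℕ} (h : (k:ℝ) ≤ x) : 1 ≤ rchoose x k := by
  rw [rchoose, le_div_iff₀ (by positivity : (0:ℝ) < k.factorial), one_mul]
  calc (k.factorial : ℝ) = ∏ i ∈ range k, ((k : ℝ) - i) := (prod_nat_cast_sub k).symm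
    _ ≤ ∏ i ∈ range k, (x - i) := by
        refine Finset.prod_le_prod (fun i hi => ?_) (fun i hi => by linarith)
        rw [mem_range] at hi
        have : (i:ℝ) + 1 ≤ k := by exact_mod_cast hi
        linarith

lemma rchoose_nonneg {x : ℝ} {k : ℕ} (h : (k:ℝ) - 1 ≤ x) : 0 ≤ rchoose x k := by
  rw [rchoose]
  apply div_nonneg _ (by positivity)
  refine Finset.prod_nonneg (fun i hi => ?_)
  rw [mem_range] at hi
  have : (i:ℝ) + 1 ≤ k := by exact_mod_cast hi
  linarith

lemma rchoose_mono {k : ℕ} {s t : ℝ} (hs : (k:ℝ) - 1 ≤ s) (hst : s ≤ t) :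
    rchoose s k ≤ rchoose t k := by
  unfold rchoose
  have h0 : ∀ i ∈ range k, (0:ℝ) ≤ s - i := by
    intro i hi
    rw [mem_range] at hi
    have : (i:ℝ) + 1 ≤ k := by exact_mod_cast hi
    linarith
  gcongr
  exact h0

lemma rchoose_strictMono {k : ℕ} (hk : 1 ≤ k) {s t : ℝ} (hs : (k:ℝ) ≤ s) (hst : s < t) :
    rchoose s k < rchoose t k := by
  unfold rchoose
  apply div_lt_div_of_pos_right ?_ (by positivity)
  refine Finset.prod_lt_prod (fun i hi => ?_) (fun i hi => by linarith) ?_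
  · rw [mem_range] at hi
    have : (i:ℝ) + 1 ≤ k := by exact_mod_cast hi
    linarith
  · exact ⟨0, by simp; omega, by simpa using hst⟩

lemma exists_rchoose_eq {k : ℕ} (hk : 1 ≤ k) {m : ℝ} (hm : 1 ≤ m) :
    ∃ y : ℝ, (k:ℝ) ≤ y ∧ rchoose y k = m := by
  have hcont : Continuous fun t : ℝ => rchoose t k := by
    unfold rchoose
    exact (continuous_finset_prod _ fun i _ => continuous_id.sub continuous_const).div_const _
  set M : ℝ := (k:ℝ) - 1 + m * k.factorial with hM
  have hfac : (1:ℝ) ≤ m * k.factorial := by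
    have : (1:ℝ) ≤ (k.factorial : ℝ) := by exact_mod_cast k.factorial_pos
    nlinarith
  have hkM : (k:ℝ) ≤ M := by rw [hM]; linarith
  have hfk : rchoose (k:ℝ) k = 1 := by
    rw [rchoose, prod_nat_cast_sub, div_self (by positivity)]
  have hfM : m ≤ rchoose M k := by
    rw [rchoose, le_div_iff₀ (by positivity : (0:ℝ) < k.factorial)]
    calc m * k.factorial = (∏ i ∈ range (k-1), (1:ℝ)) * (m * k.factorial) := by simp
      _ = ∏ i ∈ range k, (if i = 0 then m * k.factorial else 1) := by
          obtain ⟨j, rfl⟩ : ∃ j, k = j + 1 := ⟨k-1, (Nat.succ_pred_eq_of_pos hk).symm⟩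
          rw [Finset.prod_range_succ']
          simp
      _ ≤ ∏ i ∈ range k, (M - i) := by
          refine Finset.prod_le_prod (fun i hi => by positivity) (fun i hi => ?_)
          rw [mem_range] at hi
          have hik : (i:ℝ) + 1 ≤ k := by exact_mod_cast hi
          split_ifs with h
          · subst h; simp [hM]; linarith
          · rw [hM]; linarith
  have := intermediate_value_Icc hkM (hcont.continuousOn (s := Set.Icc (k:ℝ) M))
  have hmem : m ∈ Set.Icc (rchoose (k:ℝ) k) (rchoose M k) := by
    rw [hfk]; exact ⟨hm, hfM⟩
  obtain ⟨y, hy, hym⟩ := this hmem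
  exact ⟨y, hy.1, hym⟩


variable {N : ℕ}

/-- Measure used to show shifting terminates. -/
def fmeas (𝒜 : Finset (Finset (Fin N))) : ℕ := ∑ A ∈ 𝒜, ∑ a ∈ A, 2 ^ (a : ℕ)

lemma compress_singleton {u v : Fin N} {A : Finset (Fin N)} (hu : u ∉ A) (hv : v ∈ A) :
    UV.compress {u} {v} A = insert u (A.erase v) := by
  rw [UV.compress_of_disjoint_of_le (by simpa using hu) (by simpa using hv)]
  have hne : v ≠ u := fun h => hu (h ▸ hv)
  rw [sup_eq_union, union_comm, ← insert_eq, sdiff_singleton_eq_erase,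
    Finset.erase_insert_of_ne hne.symm]

lemma compress_ne_cases {u v : Fin N} {A : Finset (Fin N)} (h : UV.compress {u} {v} A ≠ A) :
    u ∉ A ∧ v ∈ A := by
  by_contra hc
  rw [not_and_or, not_not] at hc
  apply h
  rw [UV.compress]
  rw [if_neg]
  rintro ⟨h1, h2⟩
  rcases hc with hc | hc
  · exact (disjoint_singleton_left.1 h1) hc
  · exact hc (singleton_subset_iff.1 h2)

lemma fmeas_compression_lt {u v : Fin N} (huv : u < v) {𝒜 : Finset (Finset (Fin N))}
    (h : 𝓒 {u} {v} 𝒜 ≠ 𝒜) : fmeas (𝓒 {u} {v} 𝒜) < fmeas 𝒜 := by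
  set U : Finset (Fin N) := {u}
  set V : Finset (Fin N) := {v}
  rw [UV.compression] at h ⊢
  have q : ∀ Q ∈ {A ∈ 𝒜 | UV.compress U V A ∉ 𝒜}, UV.compress U V Q ≠ Q := by
    simp_rw [mem_filter]
    intro Q hQ hQ'
    rw [hQ'] at hQ
    exact hQ.2 hQ.1
  have uA : {A ∈ 𝒜 | UV.compress U V A ∈ 𝒜} ∪ {A ∈ 𝒜 | UV.compress U V A ∉ 𝒜} = 𝒜 :=
    filter_union_filter_not_eq _ _
  have ne₂ : {A ∈ 𝒜 | UV.compress U V A ∉ 𝒜}.Nonempty := by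
    refine nonempty_iff_ne_empty.2 fun z => h ?_
    rw [filter_image, z, image_empty, union_empty]
    rwa [z, union_empty] at uA
  rw [fmeas, fmeas, sum_union UV.compress_disjoint]
  conv_rhs => rw [← uA]
  rw [sum_union (disjoint_filter_filter_not _ _ _), add_lt_add_iff_left, filter_image,
    sum_image UV.compress_injOn]
  refine sum_lt_sum_of_nonempty ne₂ fun A hA => ?_
  have hne := q A hA
  obtain ⟨hu, hv⟩ := compress_ne_cases hne
  rw [compress_singleton hu hv,
    sum_insert (fun hmem => hu (erase_subset _ _ hmem)),
    ← Finset.add_sum_erase _ _ hv]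
  have : 2 ^ (u : ℕ) < 2 ^ (v : ℕ) := Nat.pow_lt_pow_right one_lt_two huv
  omega

lemma exists_shifted_aux {k : ℕ} : ∀ (n : ℕ) (𝒜 : Finset (Finset (Fin N))), fmeas 𝒜 ≤ n →
    (𝒜 : Set (Finset (Fin N))).Sized k →
    ∃ ℬ : Finset (Finset (Fin N)), #(∂ ℬ) ≤ #(∂ 𝒜) ∧ #ℬ = #𝒜 ∧
      (ℬ : Set (Finset (Fin N))).Sized k ∧
      ∀ u v : Fin N, u < v → UV.IsCompressed {u} {v} ℬ := by
  intro n
  induction n with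
  | zero =>
    intro 𝒜 hm hs
    by_cases hc : ∀ u v : Fin N, u < v → UV.IsCompressed {u} {v} 𝒜
    · exact ⟨𝒜, le_rfl, rfl, hs, hc⟩
    · push_neg at hc
      obtain ⟨u, v, huv, hnc⟩ := hc
      have := fmeas_compression_lt huv hnc
      omega
  | succ n ih =>
    intro 𝒜 hm hs
    by_cases hc : ∀ u v : Fin N, u < v → UV.IsCompressed {u} {v} 𝒜
    · exact ⟨𝒜, le_rfl, rfl, hs, hc⟩
    · push_neg at hc
      obtain ⟨u, v, huv, hnc⟩ := hc
      have hlt := fmeas_compression_lt huv hnc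
      obtain ⟨ℬ, h1, h2, h3, h4⟩ := ih (𝓒 {u} {v} 𝒜) (by omega)
        (hs.uvCompression (by simp))
      refine ⟨ℬ, h1.trans ?_, h2.trans (UV.card_compression _ _ _), h3, h4⟩
      refine UV.card_shadow_compression_le _ _ fun x hx => ⟨v, mem_singleton_self _, ?_⟩
      rw [mem_singleton] at hx
      subst hx
      simp only [Finset.erase_singleton]
      exact UV.isCompressed_self _ _

lemma exists_shifted {k : ℕ} (𝒜 : Finset (Finset (Fin N)))
    (hs : (𝒜 : Set (Finset (Fin N))).Sized k) :
    ∃ ℬ : Finset (Finset (Fin N)), #(∂ ℬ) ≤ #(∂ 𝒜) ∧ #ℬ = #𝒜 ∧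
      (ℬ : Set (Finset (Fin N))).Sized k ∧
      ∀ u v : Fin N, u < v → UV.IsCompressed {u} {v} ℬ :=
  exists_shifted_aux (fmeas 𝒜) 𝒜 le_rfl hs

lemma main (k : ℕ) : ∀ {N : ℕ} (n : ℕ) (𝒜 : Finset (Finset (Fin N))), #𝒜 ≤ n →
    (𝒜 : Set (Finset (Fin N))).Sized (k+1) → ∀ x : ℝ, ((k:ℝ)+1) ≤ x →
    rchoose x (k+1) ≤ (#𝒜 : ℝ) → rchoose x k ≤ (#(∂ 𝒜) : ℝ) := by
  induction k with
  | zero =>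
    intro N n 𝒜 hn hs x hx hcard
    push_cast at hx
    rw [rchoose_zero]
    have h1 : (1:ℝ) ≤ (#𝒜 : ℝ) := le_trans (one_le_rchoose (by push_cast; linarith)) hcard
    have h𝒜ne : 𝒜.Nonempty := card_pos.1 (by exact_mod_cast h1)
    obtain ⟨A, hA⟩ := h𝒜ne
    obtain ⟨a, rfl⟩ := card_eq_one.1 (hs hA)
    have : (∅ : Finset (Fin N)) ∈ ∂ 𝒜 :=
      mem_shadow_iff_insert_mem.2 ⟨a, by simp, by simpa using hA⟩
    have : 1 ≤ #(∂ 𝒜) := card_pos.2 ⟨∅, this⟩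
    exact_mod_cast this
  | succ k ih =>
    intro N
    intro n
    induction n with
    | zero =>
      intro 𝒜 hn hs x hx hcard
      push_cast at hx
      have h1 : (1:ℝ) ≤ (#𝒜 : ℝ) := le_trans (one_le_rchoose (by push_cast; linarith)) hcard
      have : #𝒜 = 0 := Nat.le_zero.1 hn
      rw [this] at h1; norm_num at h1
    | succ n ihn =>
      intro 𝒜 hn hs x hx hcard
      push_cast at hx
      obtain ⟨ℬ, hb1, hb2, hb3, hb4⟩ := exists_shifted 𝒜 hs
      have hb1' : (#(∂ ℬ) : ℝ) ≤ (#(∂ 𝒜) : ℝ) := by exact_mod_cast hb1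
      suffices h : rchoose x (k+1) ≤ (#(∂ ℬ) : ℝ) by linarith
      have hBcard : rchoose x (k+2) ≤ (#ℬ : ℝ) := by rw [hb2]; exact_mod_cast hcard
      have hBne : ℬ.Nonempty := by
        refine card_pos.1 ?_
        have h1 : (1:ℝ) ≤ (#ℬ : ℝ) :=
          le_trans (one_le_rchoose (by push_cast; linarith)) hBcard
        exact_mod_cast h1
      have hN : 0 < N := by
        obtain ⟨A, hA⟩ := hBne
        have hAc : #A = k + 2 := hb3 hA
        have : A.Nonempty := card_pos.1 (by omega)
        obtain ⟨a, _⟩ := this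
        exact a.pos
      set u : Fin N := ⟨0, hN⟩ with hudef
      have hu_min : ∀ a : Fin N, a ≠ u → u < a := by
        intro a ha
        have : (0:ℕ) < a.val := Nat.pos_of_ne_zero (fun h => ha (Fin.ext h))
        exact this
      have hshift : ∀ A ∈ ℬ, ∀ a ∈ A, u ∉ A → insert u (A.erase a) ∈ ℬ := by
        intro A hA a haA huA
        have hua : u < a := hu_min a (fun h => huA (h ▸ haA))
        have hmem := UV.compress_mem_compression (u := ({u} : Finset (Fin N)))
          (v := ({a} : Finset (Fin N))) hA
        rw [(hb4 u a hua).eq] at hmem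
        rwa [compress_singleton huA haA] at hmem
      set ℬ₁ := ℬ.filter (fun A => u ∈ A) with hB1def
      set L := ℬ₁.image (fun A => A.erase u) with hLdef
      set ℬ₀ := ℬ.filter (fun A => u ∉ A) with hB0def
      have hLcard : #L = #ℬ₁ := by
        refine card_image_of_injOn ?_
        intro A hA A' hA' hAA'
        rw [mem_coe, hB1def, mem_filter] at hA hA'
        dsimp only at hAA'
        rw [← insert_erase hA.2, hAA', insert_erase hA'.2]
      have hLsized : (L : Set (Finset (Fin N))).Sized (k+1) := by
        intro C hC
        rw [mem_coe, hLdef, mem_image] at hC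
        obtain ⟨A, hA, rfl⟩ := hC
        rw [hB1def, mem_filter] at hA
        rw [card_erase_of_mem hA.2, hb3 hA.1]
        omega
      have hLnotu : ∀ C ∈ L, u ∉ C := by
        intro C hC
        rw [hLdef, mem_image] at hC
        obtain ⟨A, _, rfl⟩ := hC
        exact notMem_erase _ _
      have hLsub : L ⊆ ∂ ℬ := by
        intro C hC
        rw [hLdef, mem_image] at hC
        obtain ⟨A, hA, rfl⟩ := hC
        rw [hB1def, mem_filter] at hA
        exact erase_mem_shadow hA.1 hA.2
      have hsplit : #ℬ₁ + #ℬ₀ = #ℬ := card_filter_add_card_filter_not _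
      have hB1ne : ℬ₁.Nonempty := by
        obtain ⟨A, hA⟩ := hBne
        by_cases hu : u ∈ A
        · exact ⟨A, mem_filter.2 ⟨hA, hu⟩⟩
        · have hAne : A.Nonempty := card_pos.1 (by rw [hb3 hA]; omega)
          obtain ⟨a, haA⟩ := hAne
          exact ⟨insert u (A.erase a), mem_filter.2 ⟨hshift A hA a haA hu, mem_insert_self _ _⟩⟩
      have hShad0 : ∂ ℬ₀ ⊆ L := by
        intro B hB
        rw [mem_shadow_iff_insert_mem] at hB
        obtain ⟨a, haB, hins⟩ := hB
        rw [hB0def, mem_filter] at hins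
        have huB' : u ∉ insert a B := hins.2
        have huB : u ∉ B := fun h => huB' (mem_insert_of_mem h)
        have hmem : insert u ((insert a B).erase a) ∈ ℬ :=
          hshift _ hins.1 a (mem_insert_self _ _) huB'
        rw [erase_insert haB] at hmem
        rw [hLdef, mem_image]
        exact ⟨insert u B, mem_filter.2 ⟨hmem, mem_insert_self _ _⟩, erase_insert huB⟩
      -- Key claim : |L| ≥ C(x-1, k+1)
      have hL : rchoose (x-1) (k+1) ≤ (#L : ℝ) := by
        by_contra hcon
        push_neg at hcon
        have hsplit' : (#ℬ₀ : ℝ) = (#ℬ : ℝ) - (#L : ℝ) := by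
          rw [hLcard]
          push_cast [← hsplit]
          ring
        have hb0 : rchoose (x-1) (k+2) < (#ℬ₀ : ℝ) := by
          have hp := pascal x (k+1)
          rw [hsplit']
          have : rchoose x (k+2) = rchoose (x-1) (k+2) + rchoose (x-1) (k+1) := hp
          linarith
        have hb0' : (1:ℝ) ≤ (#ℬ₀ : ℝ) := by
          have h0 : (0:ℝ) ≤ rchoose (x-1) (k+2) := rchoose_nonneg (by push_cast; linarith)
          have : (0:ℝ) < (#ℬ₀ : ℝ) := lt_of_le_of_lt h0 hb0
          have : 0 < #ℬ₀ := by exact_mod_cast this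
          exact_mod_cast this
        obtain ⟨y, hy1, hy2⟩ := exists_rchoose_eq (k := k+2) (by omega) hb0'
        have hyx : x - 1 < y := by
          by_contra hyx
          push_neg at hyx
          have := rchoose_mono (k := k+2) (by push_cast at hy1 ⊢; linarith) hyx
          rw [hy2] at this
          linarith
        have hB0n : #ℬ₀ ≤ n := by
          have h1 : 1 ≤ #ℬ₁ := card_pos.2 hB1ne
          have h2 : #ℬ = #𝒜 := hb2
          omega
        have hB0sized : (ℬ₀ : Set (Finset (Fin N))).Sized (k+2) := fun A hA =>
          hb3 (mem_of_mem_filter _ hA)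
        have hsh := ihn ℬ₀ hB0n hB0sized y (by push_cast at hy1 ⊢; linarith) (le_of_eq hy2)
        have hle : (#(∂ ℬ₀) : ℝ) ≤ (#L : ℝ) := by exact_mod_cast card_le_card hShad0
        have hstrict : rchoose (x-1) (k+1) < rchoose y (k+1) :=
          rchoose_strictMono (by omega) (by push_cast; linarith) hyx
        linarith
      -- Case (a): |∂ℬ| ≥ |L| + |∂L|
      have hIH2 : rchoose (x-1) k ≤ (#(∂ L) : ℝ) :=
        ih (#L) L le_rfl hLsized (x-1) (by push_cast; linarith) hL
      set M := (∂ L).image (insert u) with hMdef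
      have hshadLnotu : ∀ B ∈ ∂ L, u ∉ B := by
        intro B hB
        obtain ⟨C, hC, a, ha, rfl⟩ := mem_shadow_iff.1 hB
        exact fun h => hLnotu C hC (erase_subset _ _ h)
      have hMcard : #M = #(∂ L) := by
        refine card_image_of_injOn ?_
        intro B hB B' hB' hBB'
        have h1 : u ∉ B := hshadLnotu B hB
        have h2 : u ∉ B' := hshadLnotu B' hB'
        rw [← erase_insert h1, hBB', erase_insert h2]
      have hMsub : M ⊆ ∂ ℬ := by
        intro D hD
        obtain ⟨B, hB, rfl⟩ := mem_image.1 hD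
        have huB : u ∉ B := hshadLnotu B hB
        rw [mem_shadow_iff_insert_mem] at hB
        obtain ⟨w, hwB, hwL⟩ := hB
        obtain ⟨A, hA, hAe⟩ := mem_image.1 (by rwa [hLdef] at hwL : insert w B ∈ ℬ₁.image _)
        rw [mem_filter] at hA
        have hwAe : w ∈ A.erase u := by rw [hAe]; exact mem_insert_self w B
        have hwu : w ≠ u := ne_of_mem_erase hwAe
        rw [mem_shadow_iff_insert_mem]
        refine ⟨w, ?_, ?_⟩
        · rw [mem_insert]
          rintro (h | h)
          · exact hwu h
          · exact hwB h
        · rw [Finset.insert_comm, ← hAe, insert_erase hA.2]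
          exact hA.1
      have hdisj : Disjoint L M := by
        rw [disjoint_left]
        intro C hCL hCM
        obtain ⟨B, hB, rfl⟩ := mem_image.1 hCM
        exact hLnotu _ hCL (mem_insert_self _ _)
      have hunion : L ∪ M ⊆ ∂ ℬ := union_subset hLsub hMsub
      have hcardsum : #L + #(∂ L) ≤ #(∂ ℬ) := by
        rw [← hMcard, ← card_union_of_disjoint hdisj]
        exact card_le_card hunion
      have hps : rchoose x (k+1) = rchoose (x-1) (k+1) + rchoose (x-1) k := pascal x k
      rw [hps]
      have : (#L : ℝ) + (#(∂ L) : ℝ) ≤ (#(∂ ℬ) : ℝ) := by exact_mod_cast hcardsum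
      linarith


end LKK

theorem lovasz_kruskal_katona {X : Type*} [DecidableEq X] [Fintype X]
    (k : ℕ) (hk : 0 < k) (𝒜 : Finset (Finset X)) (h𝒜 : ∀ A ∈ 𝒜, A.card = k)
    (x : ℝ) (hx : (k : ℝ) ≤ x) (hcard : (𝒜.card : ℝ) = rchoose x k) :
    rchoose x (k - 1) ≤ ((Finset.shadow 𝒜).card : ℝ) := by
  classical
  obtain ⟨j, rfl⟩ : ∃ j, k = j + 1 := ⟨k - 1, (Nat.succ_pred_eq_of_pos hk).symm⟩
  simp only [Nat.add_sub_cancel]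
  set N := Fintype.card X with hN
  set e : X ≃ Fin N := Fintype.equivFin X with he
  set f : Finset X → Finset (Fin N) := fun A => A.image e with hf
  set 𝒜' := 𝒜.image f with h𝒜'
  have hinj : Function.Injective f := fun A B h => by
    have h2 := congrArg (Finset.image e.symm) h
    simpa [hf, Finset.image_image] using h2
  have hcard' : 𝒜'.card = 𝒜.card := Finset.card_image_of_injective _ hinj
  have hsized : (𝒜' : Set (Finset (Fin N))).Sized (j + 1) := by
    intro B hB
    rw [Finset.mem_coe, h𝒜', Finset.mem_image] at hB
    obtain ⟨A, hA, rfl⟩ := hB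
    rw [hf]
    rw [Finset.card_image_of_injective _ e.injective]
    exact h𝒜 A hA
  have hsub : Finset.shadow 𝒜' ⊆ (Finset.shadow 𝒜).image f := by
    intro B hB
    rw [Finset.mem_shadow_iff_insert_mem] at hB
    obtain ⟨a, haB, hins⟩ := hB
    rw [h𝒜', Finset.mem_image] at hins
    obtain ⟨A, hA, hAe⟩ := hins
    have haA : e.symm a ∈ A := by
      have h3 : a ∈ f A := by rw [hAe]; exact Finset.mem_insert_self a B
      rw [hf, Finset.mem_image] at h3
      obtain ⟨b, hb, rfl⟩ := h3
      simpa using hb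
    refine Finset.mem_image.2 ⟨A.erase (e.symm a), Finset.erase_mem_shadow hA haA, ?_⟩
    rw [hf]
    dsimp only
    rw [Finset.image_erase e.injective, Equiv.apply_symm_apply]
    have : Finset.image (⇑e) A = f A := rfl
    rw [this, hAe, Finset.erase_insert haB]
  have hmain := LKK.main j 𝒜'.card 𝒜' le_rfl hsized x (by push_cast at hx ⊢; linarith)
    (by rw [hcard']; exact le_of_eq hcard.symm)
  have h2 : (Finset.shadow 𝒜').card ≤ (Finset.shadow 𝒜).card :=
    (Finset.card_le_card hsub).trans Finset.card_image_le
  have h2' : ((Finset.shadow 𝒜').card : ℝ) ≤ ((Finset.shadow 𝒜).card : ℝ) := by exact_mod_cast h2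
  linarith
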